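/- Let E ⊂ 2^{[n+1]}_d be a set of d-element subsets of [n+1] (a d-uniform hypergraph), H(E) its 0/1 symmetric adjacency tensor, and g(z) = ⟨H(E), z^{⊗d}⟩. Then ∏_{i=1}^{d−1}(ω(E) − i) ≤ μ_d(g), where ω(E) is the maximum cardinality of a clique C ⊆ [n+1] (meaning all d-subsets of C lie in E) and μ_d(g) = max_{‖z‖_d ≤ 1} g(z). -/

import Mathlib

theorem stmt16 {n d : ℕ} (hd : 2 ≤ d) (hdn : d ≤ n + 1)
    (E : Finset (Finset (Fin (n + 1)))) (hE : ∀ S ∈ E, S.card = d)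
    (g : (Fin (n + 1) → ℝ) → ℝ)
    (hg : ∀ z, g z = (d.factorial : ℝ) * ∑ S ∈ E, ∏ i ∈ S, z i)
    (ω : ℕ)
    (hω : IsGreatest {k | ∃ C : Finset (Fin (n + 1)), C.card = k ∧
      ∀ S : Finset (Fin (n + 1)), S ⊆ C → S.card = d → S ∈ E} ω)
    (μ : ℝ)
    (hμ : IsGreatest {t | ∃ z : Fin (n + 1) → ℝ,
      (∑ i, |z i| ^ (d : ℝ)) ^ (1 / (d : ℝ)) ≤ 1 ∧ t = g z} μ) :
    (∏ i ∈ Finset.Icc 1 (d - 1), ((ω : ℝ) - (i : ℝ))) ≤ μ := by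
  have hd0 : (d : ℝ) ≠ 0 := by positivity
  -- μ ≥ 0
  have hμ0 : 0 ≤ μ := by
    refine hμ.2 ⟨0, ?_, ?_⟩
    · simp only [Pi.zero_apply, abs_zero]
      rw [Real.zero_rpow hd0, Finset.sum_const, smul_zero, one_div,
        Real.zero_rpow (inv_ne_zero hd0)]
      exact zero_le_one
    · rw [hg]
      simp only [Pi.zero_apply]
      have : ∀ S ∈ E, (∏ i ∈ S, (0:ℝ)) = 0 := by
        intro S hS
        apply Finset.prod_eq_zero (i := (Finset.card_pos.mp (by rw [hE S hS]; omega)).choose)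
        · exact (Finset.card_pos.mp (by rw [hE S hS]; omega)).choose_spec
        · rfl
      rw [Finset.sum_congr rfl this]
      simp
  -- ω ≥ d - 1
  have hωd1 : d - 1 ≤ ω := by
    obtain ⟨C', hC'sub, hC'card⟩ := Finset.exists_subset_card_eq (s := (Finset.univ : Finset (Fin (n+1))))
      (n := d - 1) (by simp; omega)
    refine hω.2 ⟨C', hC'card, fun S hS hcard => absurd (Finset.card_le_card hS) ?_⟩
    rw [hcard, hC'card]; omega
  by_cases hcase : ω < d
  · -- ω = d - 1, product is zero
    have : ω ∈ Finset.Icc 1 (d - 1) := by simp; omega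
    calc (∏ i ∈ Finset.Icc 1 (d - 1), ((ω : ℝ) - (i : ℝ)))
        = 0 := Finset.prod_eq_zero this (by simp)
      _ ≤ μ := hμ0
  push_neg at hcase
  have hω0 : 0 < ω := by omega
  obtain ⟨C, hCcard, hCclique⟩ := hω.1
  set c : ℝ := ((ω : ℝ)⁻¹) ^ ((d : ℝ)⁻¹) with hc
  have hωinv0 : (0:ℝ) ≤ (ω : ℝ)⁻¹ := by positivity
  have hc0 : 0 ≤ c := Real.rpow_nonneg hωinv0 _
  have hcd : c ^ d = (ω : ℝ)⁻¹ := Real.rpow_inv_natCast_pow hωinv0 (by omega)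
  set z : Fin (n + 1) → ℝ := fun i => if i ∈ C then c else 0 with hz
  have hzge : μ ≥ g z := by
    refine hμ.2 ⟨z, ?_, rfl⟩
    have hsum : (∑ i, |z i| ^ (d : ℝ)) = 1 := by
      have : ∀ i : Fin (n+1), |z i| ^ (d : ℝ) = if i ∈ C then (ω : ℝ)⁻¹ else 0 := by
        intro i
        by_cases h : i ∈ C
        · simp only [hz, if_pos h, abs_of_nonneg hc0]
          rw [← hcd, Real.rpow_natCast]
        · simp only [hz, if_neg h, abs_zero]
          exact Real.zero_rpow hd0
      rw [Finset.sum_congr rfl (fun i _ => this i), Finset.sum_ite_mem,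
        Finset.univ_inter, Finset.sum_const, hCcard, nsmul_eq_mul,
        mul_inv_cancel₀ (by positivity)]
    rw [hsum, Real.one_rpow]
  refine le_trans ?_ hzge
  rw [hg]
  have hsub : C.powersetCard d ⊆ E := by
    intro S hS
    rw [Finset.mem_powersetCard] at hS
    exact hCclique S hS.1 hS.2
  have hterm : ∀ S ∈ C.powersetCard d, (∏ i ∈ S, z i) = (ω : ℝ)⁻¹ := by
    intro S hS
    rw [Finset.mem_powersetCard] at hS
    calc (∏ i ∈ S, z i) = ∏ i ∈ S, c :=
          Finset.prod_congr rfl (fun i hi => by simp [hz, hS.1 hi])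
      _ = c ^ S.card := Finset.prod_const c
      _ = (ω : ℝ)⁻¹ := by rw [hS.2, hcd]
  have hlower : (↑(Nat.choose ω d) * (ω : ℝ)⁻¹) ≤ ∑ S ∈ E, ∏ i ∈ S, z i := by
    calc (↑(Nat.choose ω d) * (ω : ℝ)⁻¹)
        = ∑ S ∈ C.powersetCard d, ∏ i ∈ S, z i := by
          rw [Finset.sum_congr rfl hterm, Finset.sum_const, Finset.card_powersetCard,
            hCcard, nsmul_eq_mul]
      _ ≤ ∑ S ∈ E, ∏ i ∈ S, z i := by
          refine Finset.sum_le_sum_of_subset_of_nonneg hsub (fun S _ _ => ?_)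
          exact Finset.prod_nonneg (fun i _ => by by_cases h : i ∈ C <;> simp [hz, h, hc0])
  -- key combinatorial identity
  have hnat : d.factorial * Nat.choose ω d = ω * ∏ i ∈ Finset.Icc 1 (d - 1), (ω - i) := by
    rw [← Nat.descFactorial_eq_factorial_mul_choose, Nat.descFactorial_eq_prod_range]
    have h1 : Finset.range d = insert 0 (Finset.Icc 1 (d - 1)) := by
      ext i
      simp [Finset.mem_range, Finset.mem_Icc]
      omega
    rw [h1, Finset.prod_insert (by simp), Nat.sub_zero]
  have hcast : (∏ i ∈ Finset.Icc 1 (d - 1), ((ω : ℝ) - (i : ℝ)))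
      = ((∏ i ∈ Finset.Icc 1 (d - 1), (ω - i) : ℕ) : ℝ) := by
    rw [Nat.cast_prod]
    refine Finset.prod_congr rfl (fun i hi => ?_)
    rw [Finset.mem_Icc] at hi
    rw [Nat.cast_sub (by omega)]
  calc (∏ i ∈ Finset.Icc 1 (d - 1), ((ω : ℝ) - (i : ℝ)))
      = (d.factorial : ℝ) * (↑(Nat.choose ω d) * (ω : ℝ)⁻¹) := by
        rw [hcast]
        field_simp
        rw [← Nat.cast_mul, ← Nat.cast_mul, hnat, Nat.cast_mul]
        push_cast
        ring
    _ ≤ (d.factorial : ℝ) * ∑ S ∈ E, ∏ i ∈ S, z i := by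
        exact mul_le_mul_of_nonneg_left hlower (by positivity)
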